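/- arXiv:1903.08387 — 3 statements merged into one kernel-verified Lean document; each statement's English description precedes it below -/
import Mathlib

section
/- Let n ≥ 0 and b > 1, c > 0, c' > 0 be reals and ℓ ≥ 1 an integer. Let H_0 ⊇ H_1 ⊇ ⋯ ⊇ H_ℓ be finite sets of affine functions f : ℝ² → ℝ (nonvertical planes in ℝ³) with |H_0| ≤ n. For each j ∈ {1,…,ℓ}, let Γ_j be a finite family of at most c'·b^j downward cells such that each cell of Γ_j is intersected by at most c·n/b^j planes of H_{j−1}. Suppose that for every i ∈ {1,…,ℓ}, every plane h ∈ H_{i−1} \ H_i satisfies Σ_{j=1}^{i} #{Δ ∈ Γ_j : h intersects Δ} > 2·c·c'·ℓ. Then |H_0 \ H_ℓ| ≤ n/2. -/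
/-- A point in ℝ³, written as `(x, (y, z))`. -/
abbrev Point3 := ℝ × ℝ × ℝ

/-- A nonvertical plane in ℝ³, identified with a function `ℝ² → ℝ`. -/
abbrev Plane3 := ℝ × ℝ → ℝ

/-- `f : ℝ² → ℝ` is affine. -/
def IsAffine (f : Plane3) : Prop :=
  ∃ a b c : ℝ, ∀ x y : ℝ, f (x, y) = a * x + b * y + c

/-- The level of a point `q = (x, y, z)` with respect to a finite set `H` of planes:
the number of `f ∈ H` with `f (x, y) < z`. -/
noncomputable def level (H : Finset Plane3) (q : Point3) : ℕ :=
  {f ∈ (H : Set Plane3) | f (q.1, q.2.1) < q.2.2}.ncard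

/-- A downward cell: all points below the graph of an affine function `g`, over the
convex hull `T` of three points in the plane. -/
def IsDownwardCell (Δ : Set Point3) : Prop :=
  ∃ (t₁ t₂ t₃ : ℝ × ℝ) (g : Plane3), IsAffine g ∧
    Δ = {q : Point3 | (q.1, q.2.1) ∈ convexHull ℝ ({t₁, t₂, t₃} : Set (ℝ × ℝ)) ∧
          q.2.2 ≤ g (q.1, q.2.1)}

/-- A plane `f` intersects a downward cell `Δ` iff the graph of `f` meets `Δ`,
i.e. `f (x, y) ≤ g (x, y)` for some `(x, y) ∈ T`. -/
def Intersects (f : Plane3) (Δ : Set Point3) : Prop :=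
  ∃ xy : ℝ × ℝ, ((xy.1, xy.2, f xy) : Point3) ∈ Δ

/-- The size of the conflict list of a cell `Δ`: the number of planes of `H`
intersecting `Δ`. -/
noncomputable def conflictSize (H : Finset Plane3) (Δ : Set Point3) : ℕ :=
  {f ∈ (H : Set Plane3) | Intersects f Δ}.ncard

attribute [local instance] Classical.propDecidable

/-- The charging argument of Section 4: if `H_0 ⊇ H_1 ⊇ ⋯ ⊇ H_ℓ` with `|H_0| ≤ n`,
each `Γ_j` (for `1 ≤ j ≤ ℓ`) is a family of at most `c'·b^j` downward cells each
intersected by at most `c·n/b^j` planes of `H_{j−1}`, and every pruned plane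
`h ∈ H_{i−1} \ H_i` intersects more than `2·c·c'·ℓ` cells of `Γ_1 ∪ ⋯ ∪ Γ_i`
(counted with multiplicity over the `Γ_j`), then `|H_0 \ H_ℓ| ≤ n/2`. -/
theorem pruned_planes_bound (n : ℝ) (hn : 0 ≤ n) (b c c' : ℝ)
    (hb : 1 < b) (hc : 0 < c) (hc' : 0 < c')
    (ℓ : ℕ) (hℓ : 1 ≤ ℓ)
    (H : ℕ → Finset Plane3)
    (hplanes : ∀ f ∈ H 0, IsAffine f)
    (hmono : ∀ i : ℕ, 1 ≤ i → i ≤ ℓ → H i ⊆ H (i - 1))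
    (hH0 : ((H 0).card : ℝ) ≤ n)
    (Γ : ℕ → Finset (Set Point3))
    (hcells : ∀ j : ℕ, 1 ≤ j → j ≤ ℓ → ∀ Δ ∈ Γ j, IsDownwardCell Δ)
    (hΓcard : ∀ j : ℕ, 1 ≤ j → j ≤ ℓ → ((Γ j).card : ℝ) ≤ c' * b ^ j)
    (hconf : ∀ j : ℕ, 1 ≤ j → j ≤ ℓ →
      ∀ Δ ∈ Γ j, (conflictSize (H (j - 1)) Δ : ℝ) ≤ c * n / b ^ j)
    (hbad : ∀ i : ℕ, 1 ≤ i → i ≤ ℓ → ∀ h ∈ H (i - 1) \ H i,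
      2 * c * c' * (ℓ : ℝ) <
        ∑ j ∈ Finset.Icc 1 i,
          (({Δ ∈ ((Γ j) : Set (Set Point3)) | Intersects h Δ}.ncard : ℝ))) :
    (((H 0) \ (H ℓ)).card : ℝ) ≤ n / 2 := by
  classical
  set B := (H 0) \ (H ℓ) with hBdef
  -- real-valued count of cells of Γ j intersected by h
  set Nr : Plane3 → ℕ → ℝ :=
    fun h j => (((Γ j).filter (fun Δ => Intersects h Δ)).card : ℝ) with hNr
  have hNcard : ∀ (h : Plane3) (j : ℕ),
      ({Δ ∈ ((Γ j) : Set (Set Point3)) | Intersects h Δ}.ncard : ℝ) = Nr h j := by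
    intro h j
    rw [hNr]
    have hset : {Δ | Δ ∈ ((Γ j) : Set (Set Point3)) ∧ Intersects h Δ}
        = ((((Γ j).filter (fun Δ => Intersects h Δ)) : Finset (Set Point3)) : Set (Set Point3)) := by
      ext Δ; simp
    simp only [Set.sep_setOf] at hset ⊢
    rw [hset, Set.ncard_coe_finset]
  set W : Plane3 → ℝ :=
    fun h => ∑ j ∈ Finset.Icc 1 ℓ, (if h ∈ H (j - 1) then Nr h j else 0) with hW
  -- Claim 1: each bad plane has weight > 2cc'ℓ
  have claim1 : ∀ h ∈ B, 2 * c * c' * (ℓ : ℝ) ≤ W h := by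
    intro h hh
    rw [hBdef, Finset.mem_sdiff] at hh
    obtain ⟨hh0, hhℓ⟩ := hh
    have hne : ∃ i, h ∉ H i := ⟨ℓ, hhℓ⟩
    set i := Nat.find hne with hi
    have hi_not : h ∉ H i := Nat.find_spec hne
    have hi_min : ∀ k, k < i → h ∈ H k := fun k hk =>
      not_not.mp (Nat.find_min hne hk)
    have hi1 : 1 ≤ i := by
      by_contra hcon
      interval_cases i
      exact hi_not hh0
    have hiℓ : i ≤ ℓ := Nat.find_le hhℓ
    have hmem : h ∈ H (i - 1) \ H i := by
      refine Finset.mem_sdiff.mpr ⟨hi_min _ ?_, hi_not⟩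
      omega
    have hb1 := hbad i hi1 hiℓ h hmem
    have hb2 : 2 * c * c' * (ℓ : ℝ) < ∑ j ∈ Finset.Icc 1 i, Nr h j := by
      rwa [Finset.sum_congr rfl (fun j _ => hNcard h j)] at hb1
    have hb3 : ∑ j ∈ Finset.Icc 1 i, Nr h j ≤ W h := by
      rw [hW]
      have heq : ∀ j ∈ Finset.Icc 1 i, Nr h j = (if h ∈ H (j - 1) then Nr h j else 0) := by
        intro j hj
        rw [Finset.mem_Icc] at hj
        rw [if_pos (hi_min _ (by omega))]
      rw [Finset.sum_congr rfl heq]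
      apply Finset.sum_le_sum_of_subset_of_nonneg
      · exact Finset.Icc_subset_Icc_right hiℓ
      · intro j _ _
        split
        · positivity
        · exact le_refl 0
    linarith
  -- Claim 2: total weight is at most c*c'*n*ℓ
  have claim2 : ∑ h ∈ B, W h ≤ (ℓ : ℝ) * (c * c' * n) := by
    rw [hW]
    rw [Finset.sum_comm]
    have hj : ∀ j ∈ Finset.Icc 1 ℓ,
        ∑ h ∈ B, (if h ∈ H (j - 1) then Nr h j else 0) ≤ c * c' * n := by
      intro j hj
      rw [Finset.mem_Icc] at hj
      have hbj : (0:ℝ) < b ^ j := by positivity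
      rw [← Finset.sum_filter]
      set S := B.filter (fun h => h ∈ H (j - 1)) with hS
      have hSsub : S ⊆ H (j - 1) := fun h hh => (Finset.mem_filter.mp hh).2
      have hswap : ∑ h ∈ S, Nr h j
          = ∑ Δ ∈ Γ j, (((S.filter (fun h => Intersects h Δ)).card : ℝ)) := by
        rw [hNr]
        push_cast
        simp only [Finset.card_filter]
        push_cast
        rw [Finset.sum_comm]
      rw [hswap]
      have hstep : ∀ Δ ∈ Γ j,
          (((S.filter (fun h => Intersects h Δ)).card : ℝ)) ≤ c * n / b ^ j := by
        intro Δ hΔ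
        have hle : ((S.filter (fun h => Intersects h Δ)).card : ℝ)
            ≤ (conflictSize (H (j - 1)) Δ : ℝ) := by
          have : conflictSize (H (j - 1)) Δ
              = ((H (j - 1)).filter (fun h => Intersects h Δ)).card := by
            have hset : {f | f ∈ ((H (j-1)) : Set Plane3) ∧ Intersects f Δ}
                = ((((H (j-1)).filter (fun f => Intersects f Δ)) : Finset Plane3) : Set Plane3) := by
              ext f; simp
            rw [conflictSize]
            rw [hset, Set.ncard_coe_finset]
          rw [this]
          exact_mod_cast Finset.card_le_card (Finset.filter_subset_filter _ hSsub)
        exact hle.trans (hconf j hj.1 hj.2 Δ hΔ)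
      calc ∑ Δ ∈ Γ j, (((S.filter (fun h => Intersects h Δ)).card : ℝ))
          ≤ ∑ _Δ ∈ Γ j, (c * n / b ^ j) := Finset.sum_le_sum hstep
        _ = ((Γ j).card : ℝ) * (c * n / b ^ j) := by
            rw [Finset.sum_const, nsmul_eq_mul]
        _ ≤ (c' * b ^ j) * (c * n / b ^ j) := by
            apply mul_le_mul_of_nonneg_right (hΓcard j hj.1 hj.2)
            positivity
        _ = c * c' * n := by field_simp
    calc ∑ j ∈ Finset.Icc 1 ℓ, ∑ h ∈ B, (if h ∈ H (j - 1) then Nr h j else 0)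
        ≤ ∑ _j ∈ Finset.Icc 1 ℓ, (c * c' * n) := Finset.sum_le_sum hj
      _ = (ℓ : ℝ) * (c * c' * n) := by
          rw [Finset.sum_const, nsmul_eq_mul, Nat.card_Icc]
          norm_num
  -- combine
  have hcard : (B.card : ℝ) * (2 * c * c' * (ℓ : ℝ)) ≤ ∑ h ∈ B, W h := by
    have := Finset.card_nsmul_le_sum B W (2 * c * c' * (ℓ : ℝ)) claim1
    rwa [nsmul_eq_mul] at this
  have hℓpos : (0:ℝ) < (ℓ : ℝ) := by exact_mod_cast hℓ
  have hfin : (B.card : ℝ) * (2 * c * c' * (ℓ : ℝ)) ≤ (ℓ : ℝ) * (c * c' * n) :=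
    hcard.trans claim2
  have hkey : (B.card : ℝ) ≤ n / 2 := by
    nlinarith [mul_pos (mul_pos hc hc') hℓpos]
  exact hkey
end

section
/- Let v_i = (x_i, y_i, z_i) ∈ ℝ³ for i = 1,2,3, let T ⊆ ℝ² be the convex hull of (x_1,y_1), (x_2,y_2), (x_3,y_3), and let g : ℝ² → ℝ be an affine function with g(x_i, y_i) = z_i for i = 1,2,3; let Δ = {(x,y,z) : (x,y) ∈ T, z ≤ g(x,y)} be the downward cell under the triangle with vertices v_1, v_2, v_3. If an affine function f : ℝ² → ℝ intersects Δ (i.e., f(x,y) ≤ g(x,y) for some (x,y) ∈ T), then f(x_i, y_i) ≤ z_i for some i ∈ {1,2,3}. Consequently, for any finite set H of affine functions and any K ≥ 0, if each vertex v_i has level at most K with respect to H and no f ∈ H satisfies f(x_i, y_i) = z_i for any i, then at most 3K planes of H intersect Δ. -/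
/-- Key geometric lemma. -/
lemma affine_le_vertex (f g : Plane3) (hf : IsAffine f) (hg : IsAffine g)
    (t₁ t₂ t₃ xy : ℝ × ℝ) (hxy : xy ∈ convexHull ℝ ({t₁, t₂, t₃} : Set (ℝ × ℝ)))
    (h : f xy ≤ g xy) : f t₁ ≤ g t₁ ∨ f t₂ ≤ g t₂ ∨ f t₃ ≤ g t₃ := by
  by_contra hc
  push_neg at hc
  obtain ⟨hc1, hc2, hc3⟩ := hc
  obtain ⟨a, b, c, hfe⟩ := hf
  obtain ⟨a', b', c', hge⟩ := hg
  set S : Set (ℝ × ℝ) := {p | g p < f p} with hS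
  have hconv : Convex ℝ S := by
    rintro ⟨p1, p2⟩ hp ⟨q1, q2⟩ hq θ σ hθ hσ hθσ
    simp only [hS, Set.mem_setOf_eq] at hp hq ⊢
    have hfp : f (p1, p2) = a * p1 + b * p2 + c := hfe p1 p2
    have hgp : g (p1, p2) = a' * p1 + b' * p2 + c' := hge p1 p2
    have hfq : f (q1, q2) = a * q1 + b * q2 + c := hfe q1 q2
    have hgq : g (q1, q2) = a' * q1 + b' * q2 + c' := hge q1 q2
    have hcomb : θ • (p1, p2) + σ • (q1, q2) = (θ * p1 + σ * q1, θ * p2 + σ * q2) := by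
      simp [Prod.ext_iff]
    rw [hcomb, hfe, hge]
    have key : 0 < θ * (f (p1, p2) - g (p1, p2)) + σ * (f (q1, q2) - g (q1, q2)) := by
      rcases hθ.lt_or_eq with h0 | h0
      · nlinarith [mul_pos h0 (sub_pos.mpr hp), mul_nonneg hσ (sub_pos.mpr hq).le]
      · have hσ1 : σ = 1 := by linarith
        rw [← h0, hσ1]; nlinarith [sub_pos.mpr hq]
    rw [hfp, hgp, hfq, hgq] at key
    have expand : a * (θ * p1 + σ * q1) + b * (θ * p2 + σ * q2) + c -
        (a' * (θ * p1 + σ * q1) + b' * (θ * p2 + σ * q2) + c') =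
        θ * ((a * p1 + b * p2 + c) - (a' * p1 + b' * p2 + c')) +
        σ * ((a * q1 + b * q2 + c) - (a' * q1 + b' * q2 + c')) := by
      linear_combination (c' - c) * hθσ
    linarith
  have hsub : ({t₁, t₂, t₃} : Set (ℝ × ℝ)) ⊆ S := by
    rintro p (rfl | rfl | rfl) <;> simpa [hS] using ‹_›
  have := convexHull_min hsub hconv hxy
  simp only [hS, Set.mem_setOf_eq] at this
  linarith



/-- Conflict-list bound for a cell under a triangle (appendix proof of Lemma 2).
Let `Δ` be the downward cell under the triangle with vertices `vᵢ = (xᵢ, yᵢ, zᵢ)`,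
i.e. the points below the affine function `g` (which interpolates the three vertices)
over the convex hull `T` of the `(xᵢ, yᵢ)`.  If an affine `f` intersects `Δ` then
`f (xᵢ, yᵢ) ≤ zᵢ` for some `i`; consequently, if every vertex `vᵢ` has level at most
`K` w.r.t. `H` and no `f ∈ H` passes exactly through a vertex, then at most `3·K`
planes of `H` intersect `Δ`. -/
theorem cell_conflict_bound (x₁ y₁ z₁ x₂ y₂ z₂ x₃ y₃ z₃ : ℝ)
    (g : Plane3) (hg : IsAffine g)
    (hg1 : g (x₁, y₁) = z₁) (hg2 : g (x₂, y₂) = z₂) (hg3 : g (x₃, y₃) = z₃) :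
    (∀ f : Plane3, IsAffine f →
      (∃ xy ∈ convexHull ℝ ({(x₁, y₁), (x₂, y₂), (x₃, y₃)} : Set (ℝ × ℝ)),
        f xy ≤ g xy) →
      f (x₁, y₁) ≤ z₁ ∨ f (x₂, y₂) ≤ z₂ ∨ f (x₃, y₃) ≤ z₃) ∧
    (∀ (H : Finset Plane3), (∀ f ∈ H, IsAffine f) →
      ∀ K : ℝ, 0 ≤ K →
        (level H (x₁, y₁, z₁) : ℝ) ≤ K →
        (level H (x₂, y₂, z₂) : ℝ) ≤ K →
        (level H (x₃, y₃, z₃) : ℝ) ≤ K →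
        (∀ f ∈ H, f (x₁, y₁) ≠ z₁ ∧ f (x₂, y₂) ≠ z₂ ∧ f (x₃, y₃) ≠ z₃) →
        (conflictSize H
            {q : Point3 |
              (q.1, q.2.1) ∈ convexHull ℝ ({(x₁, y₁), (x₂, y₂), (x₃, y₃)} : Set (ℝ × ℝ)) ∧
              q.2.2 ≤ g (q.1, q.2.1)} : ℝ) ≤ 3 * K) := by
  have part1 : ∀ f : Plane3, IsAffine f →
      (∃ xy ∈ convexHull ℝ ({(x₁, y₁), (x₂, y₂), (x₃, y₃)} : Set (ℝ × ℝ)),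
        f xy ≤ g xy) →
      f (x₁, y₁) ≤ z₁ ∨ f (x₂, y₂) ≤ z₂ ∨ f (x₃, y₃) ≤ z₃ := by
    intro f hf ⟨xy, hxy, hle⟩
    have := affine_le_vertex f g hf hg (x₁, y₁) (x₂, y₂) (x₃, y₃) xy hxy hle
    rw [hg1, hg2, hg3] at this
    exact this
  refine ⟨part1, ?_⟩
  intro H hHaff K hK h1 h2 h3 hne
  set L₁ : Set Plane3 := {f ∈ (H : Set Plane3) | f (x₁, y₁) < z₁} with hL1
  set L₂ : Set Plane3 := {f ∈ (H : Set Plane3) | f (x₂, y₂) < z₂} with hL2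
  set L₃ : Set Plane3 := {f ∈ (H : Set Plane3) | f (x₃, y₃) < z₃} with hL3
  set C : Set Plane3 := {f ∈ (H : Set Plane3) |
    Intersects f {q : Point3 |
      (q.1, q.2.1) ∈ convexHull ℝ ({(x₁, y₁), (x₂, y₂), (x₃, y₃)} : Set (ℝ × ℝ)) ∧
      q.2.2 ≤ g (q.1, q.2.1)}} with hC
  have hsub : C ⊆ L₁ ∪ L₂ ∪ L₃ := by
    rintro f ⟨hfH, xy, hxy, hle⟩
    have hle' : f xy ≤ g xy := by simpa using hle
    have hxy' : xy ∈ convexHull ℝ ({(x₁, y₁), (x₂, y₂), (x₃, y₃)} : Set (ℝ × ℝ)) := by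
      simpa using hxy
    have := part1 f (hHaff f hfH) ⟨xy, hxy', hle'⟩
    obtain ⟨hne1, hne2, hne3⟩ := hne f hfH
    rcases this with h | h | h
    · exact Or.inl (Or.inl ⟨hfH, lt_of_le_of_ne h hne1⟩)
    · exact Or.inl (Or.inr ⟨hfH, lt_of_le_of_ne h hne2⟩)
    · exact Or.inr ⟨hfH, lt_of_le_of_ne h hne3⟩
  have hfin : ∀ s : Set Plane3, s ⊆ (H : Set Plane3) → s.Finite := fun s hs =>
    Set.Finite.subset H.finite_toSet hs
  have hf1 : L₁.Finite := hfin _ fun f hf => hf.1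
  have hf2 : L₂.Finite := hfin _ fun f hf => hf.1
  have hf3 : L₃.Finite := hfin _ fun f hf => hf.1
  have hcard : C.ncard ≤ L₁.ncard + L₂.ncard + L₃.ncard := by
    calc C.ncard ≤ (L₁ ∪ L₂ ∪ L₃).ncard :=
          Set.ncard_le_ncard hsub (((hf1.union hf2).union hf3))
      _ ≤ (L₁ ∪ L₂).ncard + L₃.ncard := Set.ncard_union_le _ _
      _ ≤ L₁.ncard + L₂.ncard + L₃.ncard := by
          have := Set.ncard_union_le L₁ L₂; omega
  have hlev1 : (L₁.ncard : ℝ) ≤ K := h1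
  have hlev2 : (L₂.ncard : ℝ) ≤ K := h2
  have hlev3 : (L₃.ncard : ℝ) ≤ K := h3
  have : (conflictSize H _ : ℝ) = (C.ncard : ℝ) := rfl
  rw [this]
  calc (C.ncard : ℝ) ≤ (L₁.ncard : ℝ) + L₂.ncard + L₃.ncard := by
        exact_mod_cast hcard
    _ ≤ 3 * K := by linarith
end

section
/- Let P ⊆ ℝ² be a finite nonempty set and let Δ₀ ⊆ ℝ² be the convex hull of three points (a triangle). For p ∈ P, let V_p = {c ∈ ℝ² : ‖c − p‖ ≤ ‖c − p'‖ for all p' ∈ P} be the Voronoi cell of p, a closed convex set. Then there exist p ∈ P and a point c* that is an extreme point of the compact convex set Δ₀ ∩ V_p such that min_{p'∈P} ‖c* − p'‖ = max_{c ∈ Δ₀} min_{p'∈P} ‖c − p'‖. In other words, the largest circle with center in Δ₀ containing no point of P in its interior has its center at an extreme point of the intersection of Δ₀ with some Voronoi cell of P. -/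
variable {E : Type*} [NormedAddCommGroup E] [InnerProductSpace ℝ E]

lemma convex_voronoi_half (p q : E) : Convex ℝ {x : E | dist x p ≤ dist x q} := by
  have : {x : E | dist x p ≤ dist x q}
      = {x : E | (innerSL ℝ (q - p)) x ≤ (‖q‖ ^ 2 - ‖p‖ ^ 2) / 2} := by
    ext x
    simp only [Set.mem_setOf_eq, innerSL_apply_apply, inner_sub_left, dist_eq_norm]
    rw [show (‖x - p‖ ≤ ‖x - q‖ ↔ ‖x - p‖ ^ 2 ≤ ‖x - q‖ ^ 2) from
      (pow_le_pow_iff_left₀ (norm_nonneg _) (norm_nonneg _) two_ne_zero).symm]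
    rw [norm_sub_sq_real, norm_sub_sq_real, real_inner_comm q x, real_inner_comm p x]
    constructor <;> intro h <;> linarith
  rw [this]
  exact convex_halfSpace_le (innerSL ℝ (q - p)).toLinearMap.isLinear _

lemma exists_extremePoint_isMaxOn {K : Set E} (hK : IsCompact K) (hKc : Convex ℝ K)
    (hne : K.Nonempty) {g : E → ℝ} (hg : Continuous g) (hgc : ConvexOn ℝ K g) :
    ∃ e ∈ Set.extremePoints ℝ K, ∀ x ∈ K, g x ≤ g e := by
  obtain ⟨m, hmK, hm⟩ := hK.exists_isMaxOn hne hg.continuousOn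
  set S : Set E := K ∩ {x | g m ≤ g x} with hS
  have hSm : m ∈ S := ⟨hmK, show g m ≤ g m from le_rfl⟩
  have hSext : IsExtreme ℝ K S := by
    refine ⟨Set.inter_subset_left, ?_⟩
    rintro x1 hx1 x2 hx2 x ⟨hxK, hxg⟩ hx
    rw [openSegment_eq_image] at hx
    obtain ⟨t, ⟨ht0, ht1⟩, rfl⟩ := hx
    have h1 : g x1 ≤ g m := hm hx1
    have h2 : g x2 ≤ g m := hm hx2
    have hcomb := hgc.2 hx1 hx2 (by linarith : (0:ℝ) ≤ 1 - t) (le_of_lt ht0) (by ring)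
    simp only [smul_eq_mul] at hcomb hxg
    have hxg' : g m ≤ g ((1 - t) • x1 + t • x2) := hxg
    have hgx1 : g x1 = g m := by nlinarith
    have hgx2 : g x2 = g m := by nlinarith
    exact ⟨hx1, hgx1.ge⟩
  have hScomp : IsCompact S := hK.inter_right (isClosed_le continuous_const hg)
  obtain ⟨e, he⟩ := hScomp.extremePoints_nonempty ⟨m, hSm⟩
  refine ⟨e, hSext.extremePoints_subset_extremePoints he, fun x hx => ?_⟩
  exact le_trans (hm hx) (he.1.2)



/-- The largest empty circle with center restricted to a triangle `Δ₀` has its center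
at an extreme point of the intersection of `Δ₀` with some Voronoi cell of `P`:
for a finite nonempty `P ⊆ ℝ²` and a triangle `Δ₀ = conv{a, b, c}`, there exist
`p ∈ P` and an extreme point `c*` of the compact convex set `Δ₀ ∩ V_p` (where
`V_p = {x : ∀ p' ∈ P, dist x p ≤ dist x p'}` is the Voronoi cell of `p`) such that
`c*` maximizes `min_{p' ∈ P} ‖· − p'‖` over `Δ₀`. -/
theorem largest_empty_circle_at_extreme_point
    (P : Finset (EuclideanSpace ℝ (Fin 2))) (hP : P.Nonempty)
    (a b c : EuclideanSpace ℝ (Fin 2)) :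
    ∃ p ∈ P, ∃ cstar ∈ Set.extremePoints ℝ
        (convexHull ℝ ({a, b, c} : Set (EuclideanSpace ℝ (Fin 2))) ∩
          {x : EuclideanSpace ℝ (Fin 2) | ∀ p' ∈ P, dist x p ≤ dist x p'}),
      ∀ x ∈ convexHull ℝ ({a, b, c} : Set (EuclideanSpace ℝ (Fin 2))),
        P.inf' hP (fun p' => dist x p') ≤ P.inf' hP (fun p' => dist cstar p') := by
  set Δ : Set (EuclideanSpace ℝ (Fin 2)) := convexHull ℝ ({a, b, c} : Set _) with hΔ
  have hΔcomp : IsCompact Δ := ((Set.finite_singleton c).insert b |>.insert a).isCompact_convexHull (𝕜 := ℝ)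
  have hΔne : Δ.Nonempty := ⟨a, subset_convexHull ℝ _ (by simp)⟩
  -- the min-distance function is continuous
  have hf : Continuous (fun x => P.inf' hP (fun p' => dist x p')) :=
    Continuous.finset_inf'_apply hP (fun p' _ => Continuous.dist continuous_id continuous_const)
  -- maximize over Δ
  obtain ⟨c0, hc0Δ, hc0max⟩ := hΔcomp.exists_isMaxOn hΔne hf.continuousOn
  obtain ⟨p, hpP, hpeq⟩ := Finset.exists_mem_eq_inf' hP (fun p' => dist c0 p')
  refine ⟨p, hpP, ?_⟩
  set V : Set (EuclideanSpace ℝ (Fin 2)) :=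
    {x | ∀ p' ∈ P, dist x p ≤ dist x p'} with hV
  have hVeq : V = ⋂ p' ∈ P, {x | dist x p ≤ dist x p'} := by
    ext x; simp [hV]
  have hVclosed : IsClosed V := by
    rw [hVeq]
    exact isClosed_biInter fun p' _ =>
      isClosed_le (Continuous.dist continuous_id continuous_const)
        (Continuous.dist continuous_id continuous_const)
  have hVconv : Convex ℝ V := by
    rw [hVeq]
    exact convex_iInter fun p' => convex_iInter fun _ => convex_voronoi_half p p'
  have hKcomp : IsCompact (Δ ∩ V) := hΔcomp.inter_right hVclosed
  have hKconv : Convex ℝ (Δ ∩ V) := (convex_convexHull ℝ _).inter hVconv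
  have hc0V : c0 ∈ V := fun p' hp' => hpeq ▸ Finset.inf'_le _ hp'
  obtain ⟨e, heext, hemax⟩ := exists_extremePoint_isMaxOn hKcomp hKconv ⟨c0, hc0Δ, hc0V⟩
    (Continuous.dist continuous_id continuous_const : Continuous (fun x => dist x p))
    ((convexOn_dist p hKconv))
  refine ⟨e, heext, fun x hx => ?_⟩
  have heK : e ∈ Δ ∩ V := extremePoints_subset heext
  have h1 : P.inf' hP (fun p' => dist x p') ≤ dist c0 p := by
    rw [← hpeq]; exact hc0max hx
  have h2 : dist c0 p ≤ dist e p := hemax c0 ⟨hc0Δ, hc0V⟩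
  have h3 : dist e p = P.inf' hP (fun p' => dist e p') :=
    le_antisymm (Finset.le_inf' _ _ fun p' hp' => heK.2 p' hp') (Finset.inf'_le _ hpP)
  calc P.inf' hP (fun p' => dist x p') ≤ dist c0 p := h1
    _ ≤ dist e p := h2
    _ = _ := h3
end
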